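/- An abelian group G has only finitely many finite-index subgroups if and only if G/G¹ is finite, where G¹ is the first Ulm subgroup. -/

import Mathlib

/-- The subgroup mG = {m•x : x ∈ G} of an abelian group G. -/
def nsmulRange (G : Type*) [AddCommGroup G] (m : ℕ) : AddSubgroup G :=
  (m • AddMonoidHom.id G).range

/-- The first Ulm subgroup G¹ = ⋂_{m ≥ 1} mG. -/
def ulm (G : Type*) [AddCommGroup G] : AddSubgroup G :=
  ⨅ m ∈ Set.Ioi (0 : ℕ), nsmulRange G m

section Aux

variable {G : Type*} [AddCommGroup G]

lemma mem_nsmulRange {m : ℕ} {x : G} : x ∈ nsmulRange G m ↔ ∃ y : G, m • y = x := by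
  simp [nsmulRange, AddMonoidHom.mem_range]

lemma mem_ulm {x : G} : x ∈ ulm G ↔ ∀ m : ℕ, 0 < m → x ∈ nsmulRange G m := by
  simp [ulm, AddSubgroup.mem_iInf, Set.mem_Ioi]

/-- In an infinite vector space over `ZMod p` there are infinitely many
finite-index additive subgroups (kernels of coordinate functionals). -/
lemma exists_injective_finiteIndex_of_infinite {V : Type*} [AddCommGroup V] (p : ℕ)
    [Fact p.Prime] [Module (ZMod p) V] [Infinite V] :
    ∃ f : ℕ → AddSubgroup V, Function.Injective f ∧ ∀ n, (f n).FiniteIndex := by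
  haveI : NeZero p := ⟨(Fact.out : p.Prime).ne_zero⟩
  set ι := Module.Basis.ofVectorSpaceIndex (ZMod p) V with hι
  set b : Module.Basis ι (ZMod p) V := Module.Basis.ofVectorSpace (ZMod p) V with hb
  haveI : Infinite ι := by
    by_contra hfin
    rw [not_infinite_iff_finite] at hfin
    haveI : Finite (ι →₀ ZMod p) :=
      Finite.of_injective (fun f : ι →₀ ZMod p => (f : ι → ZMod p)) DFunLike.coe_injective
    haveI : Finite V := Finite.of_equiv _ b.repr.toEquiv.symm
    exact not_finite V
  set N : ι → AddSubgroup V := fun i => ((b.coord i).toAddMonoidHom).ker with hN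
  have hmem : ∀ i j : ι, b j ∈ N i ↔ j ≠ i := by
    intro i j
    rw [hN]
    rw [AddMonoidHom.mem_ker, LinearMap.toAddMonoidHom_coe, Module.Basis.coord_apply, Module.Basis.repr_self]
    rcases eq_or_ne j i with rfl | hij
    · simp
    · simp [Finsupp.single_eq_of_ne hij, hij]
  have hNinj : Function.Injective N := by
    intro i j hij
    by_contra hne
    have h1 : b i ∈ N j := (hmem j i).mpr hne
    rw [← hij] at h1
    exact ((hmem i i).mp h1) rfl
  have hNfin : ∀ i, (N i).FiniteIndex := by
    intro i
    haveI : Finite (V ⧸ N i) :=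
      Finite.of_equiv _ (QuotientAddGroup.quotientKerEquivRange
        ((b.coord i).toAddMonoidHom)).toEquiv.symm
    exact AddSubgroup.finiteIndex_of_finite_quotient
  obtain e := Infinite.natEmbedding ι
  exact ⟨fun n => N (e n), hNinj.comp e.injective, fun n => hNfin (e n)⟩

/-- If there are only finitely many finite-index subgroups, then `G/pG` is finite
for every prime `p`. -/
lemma finite_quotient_prime (hS : {N : AddSubgroup G | N.FiniteIndex}.Finite)
    {p : ℕ} (hp : p.Prime) : Finite (G ⧸ nsmulRange G p) := by
  by_contra h
  rw [not_finite_iff_infinite] at h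
  haveI : Fact p.Prime := ⟨hp⟩
  letI : Module (ZMod p) (G ⧸ nsmulRange G p) :=
    QuotientAddGroup.zmodModule (fun x => mem_nsmulRange.mpr ⟨x, rfl⟩)
  obtain ⟨f, hf, hfi⟩ := exists_injective_finiteIndex_of_infinite (V := G ⧸ nsmulRange G p) p
  haveI := hS.to_subtype
  have hsurj := QuotientAddGroup.mk'_surjective (nsmulRange G p)
  set F : ℕ → {N : AddSubgroup G | N.FiniteIndex} := fun n =>
    ⟨AddSubgroup.comap (QuotientAddGroup.mk' (nsmulRange G p)) (f n), by
      refine ⟨?_⟩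
      rw [AddSubgroup.index_comap_of_surjective _ hsurj]
      exact (hfi n).index_ne_zero⟩ with hF
  have hFinj : Function.Injective F := by
    intro a b hab
    apply hf
    apply AddSubgroup.comap_injective hsurj
    simpa [hF, Subtype.ext_iff] using hab
  haveI := Finite.of_injective F hFinj
  exact not_finite ℕ

/-- If there are only finitely many finite-index subgroups, then `G/mG` is finite
for every `m ≥ 1`. -/
lemma finite_quotient_nsmulRange (hS : {N : AddSubgroup G | N.FiniteIndex}.Finite) :
    ∀ m : ℕ, 0 < m → Finite (G ⧸ nsmulRange G m) := by
  intro m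
  induction m using Nat.strong_induction_on with
  | _ m ih =>
    intro hm
    rcases eq_or_ne m 1 with rfl | hm1
    · have htop : nsmulRange G 1 = ⊤ := by
        ext x
        simp only [AddSubgroup.mem_top, iff_true]
        exact mem_nsmulRange.mpr ⟨x, one_nsmul x⟩
      rw [htop]
      haveI := QuotientAddGroup.subsingleton_quotient_top (G := G)
      exact Finite.of_subsingleton
    · set p := m.minFac with hpdef
      have hp : p.Prime := Nat.minFac_prime hm1
      set m' := m / p with hm'def
      have hpd : p ∣ m := Nat.minFac_dvd m
      have hmm : p * m' = m := Nat.mul_div_cancel' hpd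
      have hm'pos : 0 < m' := Nat.div_pos (Nat.minFac_le hm) hp.pos
      have hm'lt : m' < m := Nat.div_lt_self hm hp.one_lt
      haveI hfin' : Finite (G ⧸ nsmulRange G m') := ih m' hm'lt hm'pos
      haveI hfinp : Finite (G ⧸ nsmulRange G p) := finite_quotient_prime hS hp
      have h_le : nsmulRange G m ≤ nsmulRange G p := by
        intro x hx
        obtain ⟨y, rfl⟩ := mem_nsmulRange.mp hx
        exact mem_nsmulRange.mpr ⟨m' • y, by rw [smul_smul, hmm]⟩
      set K := (nsmulRange G m).addSubgroupOf (nsmulRange G p) with hK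
      have hψmem : ∀ x : G, (p • AddMonoidHom.id G) x ∈ nsmulRange G p :=
        fun x => AddMonoidHom.mem_range.mpr ⟨x, rfl⟩
      set ψ : G →+ ↥(nsmulRange G p) :=
        AddMonoidHom.codRestrict (p • AddMonoidHom.id G) _ hψmem with hψ
      set g : G →+ (↥(nsmulRange G p) ⧸ K) := (QuotientAddGroup.mk' K).comp ψ with hg
      have hker : ∀ x ∈ nsmulRange G m', g x = 0 := by
        intro x hx
        obtain ⟨y, rfl⟩ := mem_nsmulRange.mp hx
        show QuotientAddGroup.mk' K (ψ (m' • y)) = 0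
        rw [QuotientAddGroup.mk'_apply, QuotientAddGroup.eq_zero_iff]
        rw [hK, AddSubgroup.mem_addSubgroupOf]
        show p • (m' • y) ∈ nsmulRange G m
        exact mem_nsmulRange.mpr ⟨y, by rw [← hmm, mul_smul]⟩
      have hgsurj : Function.Surjective g := by
        intro q
        obtain ⟨⟨y, hy⟩, rfl⟩ := QuotientAddGroup.mk'_surjective K q
        obtain ⟨x, hx⟩ := mem_nsmulRange.mp hy
        exact ⟨x, congrArg (QuotientAddGroup.mk' K) (Subtype.ext hx)⟩
      set g' := QuotientAddGroup.lift (nsmulRange G m') g hker with hg'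
      have hg'surj : Function.Surjective g' := by
        intro q
        obtain ⟨x, hx⟩ := hgsurj q
        exact ⟨QuotientAddGroup.mk x, hx⟩
      haveI : Finite (↥(nsmulRange G p) ⧸ K) := Finite.of_surjective g' hg'surj
      exact Finite.of_equiv _ (AddSubgroup.quotientEquivProdOfLE h_le).symm

end Aux

/-- G has only finitely many finite-index subgroups iff G/G¹ is finite. -/
theorem finitely_many_finiteIndex_iff (G : Type*) [AddCommGroup G] :
    {N : AddSubgroup G | N.FiniteIndex}.Finite ↔ Finite (G ⧸ ulm G) := by
  constructor
  · intro hS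
    haveI := hS.to_subtype
    have key : ∀ m : ℕ, 0 < m → (nsmulRange G m).FiniteIndex := fun m hm =>
      haveI := finite_quotient_nsmulRange hS m hm
      AddSubgroup.finiteIndex_of_finite_quotient
    set H : AddSubgroup G :=
      ⨅ N : {N : AddSubgroup G | N.FiniteIndex}, (N : AddSubgroup G) with hH
    haveI : H.FiniteIndex := AddSubgroup.finiteIndex_iInf fun N => N.2
    have hle : H ≤ ulm G := by
      refine le_iInf fun m => le_iInf fun hm => ?_
      exact iInf_le (fun N : {N : AddSubgroup G | N.FiniteIndex} => (N : AddSubgroup G))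
        ⟨nsmulRange G m, key m hm⟩
    haveI : (ulm G).FiniteIndex := AddSubgroup.finiteIndex_of_le hle
    infer_instance
  · intro h
    haveI : Finite (AddSubgroup (G ⧸ ulm G)) :=
      Finite.of_injective (fun N => (N : Set (G ⧸ ulm G))) SetLike.coe_injective
    have hulm : ∀ N : AddSubgroup G, N.FiniteIndex → ulm G ≤ N := by
      intro N hN x hx
      obtain ⟨y, rfl⟩ := mem_nsmulRange.mp
        (mem_ulm.mp hx N.index (Nat.pos_of_ne_zero hN.index_ne_zero))
      exact AddSubgroup.nsmul_index_mem N y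
    apply Set.Finite.of_finite_image
      (f := fun N => AddSubgroup.map (QuotientAddGroup.mk' (ulm G)) N)
    · exact Set.toFinite _
    · intro N₁ h₁ N₂ h₂ hmap
      have e : ∀ N : AddSubgroup G, N.FiniteIndex →
          AddSubgroup.comap (QuotientAddGroup.mk' (ulm G))
            (AddSubgroup.map (QuotientAddGroup.mk' (ulm G)) N) = N := by
        intro N hN
        rw [AddSubgroup.comap_map_eq, QuotientAddGroup.ker_mk',
          sup_eq_left.mpr (hulm N hN)]
      rw [← e N₁ h₁, ← e N₂ h₂]
      exact congrArg _ hmap
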